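/- arXiv:1910.04900 — 2 statements merged into one kernel-verified Lean document; each statement's English description precedes it below -/
import Mathlib

section
/- Fix π_A ∈ (0,1), μ_A > 0 and μ_N < 0, let G(x) = (1−π_A)·Φ(Φ⁻¹(x)+μ_N) + π_A·Φ(Φ⁻¹(x)+μ_A) for x ∈ (0,1) with G(0)=0 and G(1)=1, and let c* ∈ (0,1) be the unique interior zero of J(x) = x − G(x). Then for every λ ∈ [0, c*) and every τ ∈ (c*, 1] with τ − λ < 1, one has τ − λ > G(τ) − G(λ); equivalently, C(λ,τ) := (τ−λ)/(G(τ)−G(λ)) > 1. -/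
open MeasureTheory ProbabilityTheory

/-- The standard normal CDF `Φ`. -/
noncomputable def stdNormalCDF (x : ℝ) : ℝ :=
  (ProbabilityTheory.gaussianReal 0 1 (Set.Iic x)).toReal

/-- The inverse `Φ⁻¹` of the standard normal CDF (on `(0,1)`). -/
noncomputable def stdNormalQuantile : ℝ → ℝ :=
  Function.invFun stdNormalCDF

namespace AddisAux

open Set Filter

/-- The standard normal density. -/
noncomputable def phi : ℝ → ℝ := gaussianPDFReal 0 1

lemma phi_pos (t : ℝ) : 0 < phi t := gaussianPDFReal_pos 0 1 t one_ne_zero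

lemma phi_integrable : Integrable phi := integrable_gaussianPDFReal 0 1

lemma phi_def (t : ℝ) : phi t = (Real.sqrt (2 * Real.pi))⁻¹ * Real.exp (-t ^ 2 / 2) := by
  simp only [phi, gaussianPDFReal]
  norm_num

lemma phi_le_phi {s t : ℝ} (h : t ^ 2 ≤ s ^ 2) : phi s ≤ phi t := by
  rw [phi_def, phi_def]
  have hc : (0:ℝ) < (Real.sqrt (2 * Real.pi))⁻¹ := by positivity
  have h2 : Real.exp (-s ^ 2 / 2) ≤ Real.exp (-t ^ 2 / 2) :=
    Real.exp_le_exp.mpr (by linarith)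
  nlinarith [Real.exp_pos (-s^2/2)]

lemma phi_mono_neg {s t : ℝ} (hst : s ≤ t) (ht : t ≤ 0) : phi s ≤ phi t :=
  phi_le_phi (by nlinarith)

lemma phi_mono_pos {s t : ℝ} (hs : 0 ≤ s) (hst : s ≤ t) : phi t ≤ phi s :=
  phi_le_phi (by nlinarith)

lemma Phi_eq_integral (x : ℝ) : stdNormalCDF x = ∫ t in Iic x, phi t := by
  rw [stdNormalCDF, gaussianReal_apply_eq_integral 0 one_ne_zero, ENNReal.toReal_ofReal]
  · rfl
  · exact setIntegral_nonneg measurableSet_Iic fun t _ => (phi_pos t).le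

lemma Phi_sub (a b : ℝ) : stdNormalCDF b - stdNormalCDF a = ∫ t in a..b, phi t := by
  rw [Phi_eq_integral, Phi_eq_integral]
  exact intervalIntegral.integral_Iic_sub_Iic phi_integrable.integrableOn
    phi_integrable.integrableOn

lemma phi_ii (a b : ℝ) : IntervalIntegrable phi volume a b :=
  phi_integrable.intervalIntegrable

lemma Phi_sub_le {a b : ℝ} (hab : a ≤ b) {M : ℝ} (hM : ∀ t ∈ Icc a b, phi t ≤ M) :
    stdNormalCDF b - stdNormalCDF a ≤ (b - a) * M := by
  rw [Phi_sub]
  calc ∫ t in a..b, phi t ≤ ∫ _ in a..b, M :=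
        intervalIntegral.integral_mono_on hab (phi_ii a b) intervalIntegrable_const hM
    _ = (b - a) * M := by simp [mul_comm]

lemma le_Phi_sub {a b : ℝ} (hab : a ≤ b) {m : ℝ} (hm : ∀ t ∈ Icc a b, m ≤ phi t) :
    (b - a) * m ≤ stdNormalCDF b - stdNormalCDF a := by
  rw [Phi_sub]
  calc (b - a) * m = ∫ _ in a..b, m := by simp [mul_comm]
    _ ≤ ∫ t in a..b, phi t :=
        intervalIntegral.integral_mono_on hab intervalIntegrable_const (phi_ii a b) hm

lemma Phi_strictMono : StrictMono stdNormalCDF := by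
  intro a b hab
  have h := le_Phi_sub hab.le (m := phi a ⊓ phi b) (fun t ht => ?side)
  · have ha := phi_pos a
    have hb := phi_pos b
    have hmin : 0 < phi a ⊓ phi b := lt_min ha hb
    nlinarith
  case side =>
    rcases le_total t 0 with h0 | h0
    · exact le_trans inf_le_left (phi_mono_neg ht.1 h0)
    · exact le_trans inf_le_right (phi_mono_pos h0 ht.2)

lemma Phi_mono : Monotone stdNormalCDF := Phi_strictMono.monotone

lemma Phi_continuous : Continuous stdNormalCDF := by
  have h : stdNormalCDF = fun x => stdNormalCDF 0 + ∫ t in (0:ℝ)..x, phi t := by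
    funext x; rw [← Phi_sub]; ring
  rw [h]
  exact continuous_const.add (intervalIntegral.continuous_primitive (fun a b => phi_ii a b) 0)

lemma Phi_mem (q : ℝ) : stdNormalCDF q ∈ Ioo (0:ℝ) 1 := by
  constructor
  · have h := Phi_strictMono (show q - 1 < q by linarith)
    have h0 : 0 ≤ stdNormalCDF (q - 1) := by
      rw [stdNormalCDF]; positivity
    linarith
  · have h := Phi_strictMono (show q < q + 1 by linarith)
    have h1 : stdNormalCDF (q + 1) ≤ 1 := by
      rw [stdNormalCDF]
      exact ENNReal.toReal_le_of_le_ofReal one_pos.le (by simpa using prob_le_one)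
    linarith

lemma Phi_tendsto_atBot : Tendsto stdNormalCDF atBot (nhds 0) := by
  have h : stdNormalCDF = ProbabilityTheory.cdf (gaussianReal 0 1) := by
    funext x; rw [stdNormalCDF, cdf_eq_real, measureReal_def]
  rw [h]; exact tendsto_cdf_atBot _

lemma Phi_tendsto_atTop : Tendsto stdNormalCDF atTop (nhds 1) := by
  have h : stdNormalCDF = ProbabilityTheory.cdf (gaussianReal 0 1) := by
    funext x; rw [stdNormalCDF, cdf_eq_real, measureReal_def]
  rw [h]; exact tendsto_cdf_atTop _

lemma Phi_surj {x : ℝ} (hx : x ∈ Ioo (0:ℝ) 1) : ∃ q, stdNormalCDF q = x := by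
  obtain ⟨a, ha⟩ := (Phi_tendsto_atBot.eventually (eventually_lt_nhds hx.1)).exists
  obtain ⟨b, hb⟩ := (Phi_tendsto_atTop.eventually (eventually_gt_nhds hx.2)).exists
  have hab : a ≤ b := by
    by_contra h
    exact absurd (Phi_strictMono (lt_of_not_ge h)) (by linarith)
  obtain ⟨q, _, hq⟩ := intermediate_value_Icc hab Phi_continuous.continuousOn
    (Set.mem_Icc.mpr ⟨ha.le, hb.le⟩)
  exact ⟨q, hq⟩

lemma Phi_quantile {x : ℝ} (hx : x ∈ Ioo (0:ℝ) 1) :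
    stdNormalCDF (stdNormalQuantile x) = x := by
  obtain ⟨q, hq⟩ := Phi_surj hx
  exact Function.invFun_eq ⟨q, hq⟩

lemma quantile_Phi (q : ℝ) : stdNormalQuantile (stdNormalCDF q) = q :=
  Function.leftInverse_invFun Phi_strictMono.injective q

lemma phi_shift_lt {K L d : ℝ} (hL : 0 < L) {q : ℝ}
    (h : K / L < Real.exp (-d * q - d ^ 2 / 2)) :
    K * phi q < L * phi (q + d) := by
  have hexp : phi (q + d) = phi q * Real.exp (-d * q - d ^ 2 / 2) := by
    rw [phi_def, phi_def, mul_assoc, ← Real.exp_add]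
    ring_nf
  rw [hexp]
  have hp := phi_pos q
  have h2 : K < L * Real.exp (-d * q - d ^ 2 / 2) := by
    rw [div_lt_iff₀ hL] at h; linarith [h]
  calc K * phi q < (L * Real.exp (-d * q - d ^ 2 / 2)) * phi q := by nlinarith
    _ = L * (phi q * Real.exp (-d * q - d ^ 2 / 2)) := by ring

lemma R_eventually_neg {πA μA μN : ℝ} (h0 : 0 < πA) (h1 : πA < 1) (hμA : 0 < μA)
    (hμN : μN < 0) :
    ∃ q₀ : ℝ, ∀ q ≤ q₀,
      stdNormalCDF q - ((1 - πA) * stdNormalCDF (q + μN) + πA * stdNormalCDF (q + μA)) < 0 := by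
  set Φ := stdNormalCDF
  have hL : (0:ℝ) < πA * (μA / 2) := by nlinarith
  have hA : Tendsto (fun q : ℝ => -(μA / 2) * q - (μA / 2) ^ 2 / 2) atBot atTop := by
    have h1' : Tendsto (fun q : ℝ => -(μA / 2) * q) atBot atTop := by
      have hneg : Tendsto (fun q : ℝ => -q) atBot atTop := tendsto_neg_atBot_atTop
      have h2 := hneg.const_mul_atTop (show (0:ℝ) < μA / 2 by linarith)
      simpa [mul_comm, neg_mul, mul_neg] using h2
    simpa [sub_eq_add_neg] using tendsto_atTop_add_const_right atBot (-((μA / 2) ^ 2 / 2)) h1'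
  have hE : ∀ᶠ q in atBot,
      ((1 - πA) * (-μN)) / (πA * (μA / 2)) < Real.exp (-(μA / 2) * q - (μA / 2) ^ 2 / 2) :=
    (Real.tendsto_exp_atTop.comp hA).eventually_gt_atTop _
  have hE2 : ∀ᶠ q in atBot, q ≤ -μA := eventually_le_atBot (-μA)
  obtain ⟨q₀, hq₀⟩ := eventually_atBot.mp (hE.and hE2)
  refine ⟨q₀, fun q hq => ?_⟩
  obtain ⟨hexp, hqA⟩ := hq₀ q hq
  have hq0 : q ≤ 0 := by linarith
  have hqA2 : q + μA ≤ 0 := by linarith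
  have hb1 : Φ q - Φ (q + μN) ≤ (-μN) * phi q := by
    have h := Phi_sub_le (a := q + μN) (b := q) (by linarith)
      (M := phi q) (fun t ht => phi_mono_neg ht.2 hq0)
    calc Φ q - Φ (q + μN) ≤ (q - (q + μN)) * phi q := h
      _ = (-μN) * phi q := by ring
  have hb2 : (μA / 2) * phi (q + μA / 2) ≤ Φ (q + μA) - Φ (q + μA / 2) := by
    have h := le_Phi_sub (a := q + μA / 2) (b := q + μA) (by linarith)
      (m := phi (q + μA / 2)) (fun t ht => phi_mono_neg ht.1 (le_trans ht.2 hqA2))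
    calc (μA / 2) * phi (q + μA / 2)
        = ((q + μA) - (q + μA / 2)) * phi (q + μA / 2) := by ring
      _ ≤ Φ (q + μA) - Φ (q + μA / 2) := h
  have hb3 : Φ q ≤ Φ (q + μA / 2) := Phi_mono (by linarith)
  have hb4 : (μA / 2) * phi (q + μA / 2) ≤ Φ (q + μA) - Φ q := by linarith
  have hcmp : ((1 - πA) * (-μN)) * phi q < (πA * (μA / 2)) * phi (q + μA / 2) :=
    phi_shift_lt hL hexp
  have hw1 : (1 - πA) * (Φ q - Φ (q + μN)) ≤ (1 - πA) * ((-μN) * phi q) :=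
    mul_le_mul_of_nonneg_left hb1 (by linarith)
  have hw2 : πA * ((μA / 2) * phi (q + μA / 2)) ≤ πA * (Φ (q + μA) - Φ q) :=
    mul_le_mul_of_nonneg_left hb4 (by linarith)
  have hsplit : Φ q - ((1 - πA) * Φ (q + μN) + πA * Φ (q + μA))
      = (1 - πA) * (Φ q - Φ (q + μN)) - πA * (Φ (q + μA) - Φ q) := by ring
  rw [hsplit]
  have e1 : (1 - πA) * ((-μN) * phi q) = ((1 - πA) * (-μN)) * phi q := by ring
  have e2 : πA * ((μA / 2) * phi (q + μA / 2)) = (πA * (μA / 2)) * phi (q + μA / 2) := by ring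
  linarith [hw1, hw2, hcmp, e1.le, e2.le]

lemma R_eventually_pos {πA μA μN : ℝ} (h0 : 0 < πA) (h1 : πA < 1) (hμA : 0 < μA)
    (hμN : μN < 0) :
    ∃ q₁ : ℝ, ∀ q, q₁ ≤ q →
      0 < stdNormalCDF q - ((1 - πA) * stdNormalCDF (q + μN) + πA * stdNormalCDF (q + μA)) := by
  set Φ := stdNormalCDF
  have hL : (0:ℝ) < (1 - πA) * (-μN / 2) := by nlinarith
  have hA : Tendsto (fun q : ℝ => -(μN / 2) * q - (μN / 2) ^ 2 / 2) atTop atTop := by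
    have h1' : Tendsto (fun q : ℝ => -(μN / 2) * q) atTop atTop := by
      have hid : Tendsto (fun q : ℝ => q) atTop atTop := tendsto_id
      have h2 := hid.const_mul_atTop (show (0:ℝ) < -(μN / 2) by linarith)
      simpa using h2
    simpa [sub_eq_add_neg] using tendsto_atTop_add_const_right atTop (-((μN / 2) ^ 2 / 2)) h1'
  have hE : ∀ᶠ q in atTop,
      (πA * μA) / ((1 - πA) * (-μN / 2)) < Real.exp (-(μN / 2) * q - (μN / 2) ^ 2 / 2) :=
    (Real.tendsto_exp_atTop.comp hA).eventually_gt_atTop _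
  have hE2 : ∀ᶠ q in atTop, -μN ≤ q := eventually_ge_atTop (-μN)
  obtain ⟨q₁, hq₁⟩ := eventually_atTop.mp (hE.and hE2)
  refine ⟨q₁, fun q hq => ?_⟩
  obtain ⟨hexp, hqN⟩ := hq₁ q hq
  have hq0 : 0 ≤ q := by linarith
  have hqN0 : 0 ≤ q + μN := by linarith
  have hb1 : (-μN / 2) * phi (q + μN / 2) ≤ Φ q - Φ (q + μN) := by
    have h := le_Phi_sub (a := q + μN) (b := q + μN / 2) (by linarith)
      (m := phi (q + μN / 2)) (fun t ht => phi_mono_pos (le_trans hqN0 ht.1) ht.2)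
    have h3 : Φ (q + μN / 2) ≤ Φ q := Phi_mono (by linarith)
    calc (-μN / 2) * phi (q + μN / 2)
        = ((q + μN / 2) - (q + μN)) * phi (q + μN / 2) := by ring
      _ ≤ Φ (q + μN / 2) - Φ (q + μN) := h
      _ ≤ Φ q - Φ (q + μN) := by linarith
  have hb2 : Φ (q + μA) - Φ q ≤ μA * phi q := by
    have h := Phi_sub_le (a := q) (b := q + μA) (by linarith)
      (M := phi q) (fun t ht => phi_mono_pos hq0 ht.1)
    calc Φ (q + μA) - Φ q ≤ ((q + μA) - q) * phi q := h
      _ = μA * phi q := by ring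
  have hcmp : (πA * μA) * phi q < ((1 - πA) * (-μN / 2)) * phi (q + μN / 2) :=
    phi_shift_lt hL hexp
  have hw1 : (1 - πA) * ((-μN / 2) * phi (q + μN / 2)) ≤ (1 - πA) * (Φ q - Φ (q + μN)) :=
    mul_le_mul_of_nonneg_left hb1 (by linarith)
  have hw2 : πA * (Φ (q + μA) - Φ q) ≤ πA * (μA * phi q) :=
    mul_le_mul_of_nonneg_left hb2 (by linarith)
  have hsplit : Φ q - ((1 - πA) * Φ (q + μN) + πA * Φ (q + μA))
      = (1 - πA) * (Φ q - Φ (q + μN)) - πA * (Φ (q + μA) - Φ q) := by ring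
  rw [hsplit]
  have e1 : (1 - πA) * ((-μN / 2) * phi (q + μN / 2))
      = ((1 - πA) * (-μN / 2)) * phi (q + μN / 2) := by ring
  have e2 : πA * (μA * phi q) = (πA * μA) * phi q := by ring
  linarith [hw1, hw2, hcmp, e1.le, e2.le]

end AddisAux

/-- **Sufficient condition for ADDIS-Spending to beat Alpha-Spending.** With
`G(x) = (1−π_A)Φ(Φ⁻¹(x)+μ_N) + π_A Φ(Φ⁻¹(x)+μ_A)` on `(0,1)`, `G(0)=0`, `G(1)=1`, and `c*`
the unique interior zero of `J(x) = x − G(x)`, every `λ ∈ [0, c*)` and `τ ∈ (c*, 1]` with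
`τ − λ < 1` satisfy `τ − λ > G(τ) − G(λ)`; equivalently `(τ−λ)/(G(τ)−G(λ)) > 1`. -/
theorem addis_parameter_condition
    (πA μA μN : ℝ) (hπA : πA ∈ Set.Ioo (0 : ℝ) 1) (hμA : 0 < μA) (hμN : μN < 0)
    (G : ℝ → ℝ)
    (hG : ∀ x ∈ Set.Ioo (0 : ℝ) 1,
      G x = (1 - πA) * stdNormalCDF (stdNormalQuantile x + μN) +
        πA * stdNormalCDF (stdNormalQuantile x + μA))
    (hG0 : G 0 = 0) (hG1 : G 1 = 1)
    (c : ℝ) (hc : c ∈ Set.Ioo (0 : ℝ) 1) (hczero : c - G c = 0)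
    (hcuniq : ∀ x ∈ Set.Ioo (0 : ℝ) 1, x - G x = 0 → x = c) :
    ∀ lam ∈ Set.Ico (0 : ℝ) c, ∀ τ ∈ Set.Ioc c 1, τ - lam < 1 →
      G τ - G lam < τ - lam ∧ 1 < (τ - lam) / (G τ - G lam) := by
  obtain ⟨hπ0, hπ1⟩ := hπA
  obtain ⟨hc0, hc1⟩ := hc
  set R : ℝ → ℝ := fun q => stdNormalCDF q - ((1 - πA) * stdNormalCDF (q + μN) + πA * stdNormalCDF (q + μA)) with hRdef
  have hRcont : Continuous R := by
    have hΦc := AddisAux.Phi_continuous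
    rw [hRdef]
    exact hΦc.sub (((continuous_const.mul (hΦc.comp (continuous_id.add continuous_const)))).add
      (continuous_const.mul (hΦc.comp (continuous_id.add continuous_const))))
  -- J x = R (stdNormalQuantile x) on (0,1)
  have hJR : ∀ x ∈ Set.Ioo (0:ℝ) 1, x - G x = R (stdNormalQuantile x) := by
    intro x hx
    rw [hG x hx, hRdef]
    simp only
    rw [AddisAux.Phi_quantile hx]
  -- the unique zero of R
  have hRzero : ∀ q, R q = 0 → q = stdNormalQuantile c := by
    intro q h
    have hmem := AddisAux.Phi_mem q
    have hJ : stdNormalCDF q - G (stdNormalCDF q) = 0 := by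
      rw [hG _ hmem, AddisAux.quantile_Phi q]
      exact h
    have hx : stdNormalCDF q = c := hcuniq _ hmem hJ
    rw [← hx, AddisAux.quantile_Phi]
  have hQc : stdNormalCDF (stdNormalQuantile c) = c := AddisAux.Phi_quantile ⟨hc0, hc1⟩
  -- R is negative left of stdNormalQuantile c
  have hneg : ∀ q, q < stdNormalQuantile c → R q < 0 := by
    obtain ⟨q₀, hq₀⟩ := AddisAux.R_eventually_neg hπ0 hπ1 hμA hμN
    intro q hq
    rcases lt_trichotomy (R q) 0 with h | h | h
    · exact h
    · exact absurd (hRzero q h) (ne_of_lt hq)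
    · exfalso
      set q' := min q₀ (q - 1) with hq'def
      have hRq' : R q' < 0 := hq₀ q' (min_le_left _ _)
      have hq'q : q' ≤ q := le_trans (min_le_right _ _) (by linarith)
      obtain ⟨z, hz, hz0⟩ := intermediate_value_Icc hq'q hRcont.continuousOn
        (Set.mem_Icc.mpr ⟨hRq'.le, h.le⟩)
      have hzc : z = stdNormalQuantile c := hRzero z hz0
      have : z ≤ q := hz.2
      rw [hzc] at this
      linarith
  -- R is positive right of stdNormalQuantile c
  have hpos : ∀ q, stdNormalQuantile c < q → 0 < R q := by
    obtain ⟨q₁, hq₁⟩ := AddisAux.R_eventually_pos hπ0 hπ1 hμA hμN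
    intro q hq
    rcases lt_trichotomy (R q) 0 with h | h | h
    · exfalso
      set q' := max q₁ (q + 1) with hq'def
      have hRq' : 0 < R q' := hq₁ q' (le_max_left _ _)
      have hqq' : q ≤ q' := le_trans (by linarith) (le_max_right _ _)
      obtain ⟨z, hz, hz0⟩ := intermediate_value_Icc hqq' hRcont.continuousOn
        (Set.mem_Icc.mpr ⟨h.le, hRq'.le⟩)
      have hzc : z = stdNormalQuantile c := hRzero z hz0
      have : q ≤ z := hz.1
      rw [hzc] at this
      linarith
    · exact absurd (hRzero q h) (ne_of_gt hq)
    · exact h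
  -- comparing quantiles
  have hQlt : ∀ x ∈ Set.Ioo (0:ℝ) 1, ∀ y ∈ Set.Ioo (0:ℝ) 1, x < y → stdNormalQuantile x < stdNormalQuantile y := by
    intro x hx y hy hxy
    by_contra h
    have h2 : stdNormalCDF (stdNormalQuantile y) ≤ stdNormalCDF (stdNormalQuantile x) := AddisAux.Phi_mono (not_lt.mp h)
    rw [AddisAux.Phi_quantile hx, AddisAux.Phi_quantile hy] at h2
    linarith
  -- sign of J on each side of c
  have hJneg : ∀ x ∈ Set.Ioo (0:ℝ) 1, x < c → x - G x < 0 := by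
    intro x hx hxc
    rw [hJR x hx]
    exact hneg _ (by
      have := hQlt x hx c ⟨hc0, hc1⟩ hxc
      exact this)
  have hJpos : ∀ x ∈ Set.Ioo (0:ℝ) 1, c < x → 0 < x - G x := by
    intro x hx hcx
    rw [hJR x hx]
    exact hpos _ (hQlt c ⟨hc0, hc1⟩ x hx hcx)
  intro lam hlam τ hτ hlt
  obtain ⟨hlam0, hlamc⟩ := hlam
  obtain ⟨hcτ, hτ1⟩ := hτ
  have hτ0 : 0 < τ := lt_trans hc0 hcτ
  have hlam1 : lam < 1 := lt_trans hlamc hc1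
  -- first part
  have main : G τ - G lam < τ - lam := by
    rcases eq_or_lt_of_le hlam0 with h0 | h0
    · -- lam = 0
      have hτlt1 : τ < 1 := by rw [← h0] at hlt; linarith
      have hJτ := hJpos τ ⟨hτ0, hτlt1⟩ hcτ
      rw [← h0, hG0]
      linarith
    · -- 0 < lam
      have hJlam := hJneg lam ⟨h0, hlam1⟩ hlamc
      rcases eq_or_lt_of_le hτ1 with h1 | h1
      · rw [h1, hG1]; linarith
      · have hJτ := hJpos τ ⟨hτ0, h1⟩ hcτ
        linarith
  -- positivity of the denominator
  have hden : 0 < G τ - G lam := by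
    have hGpos : ∀ x ∈ Set.Ioo (0:ℝ) 1, 0 < G x := by
      intro x hx
      rw [hG x hx]
      have h1 := (AddisAux.Phi_mem (stdNormalQuantile x + μN)).1
      have h2 := (AddisAux.Phi_mem (stdNormalQuantile x + μA)).1
      nlinarith
    have hGlt1 : ∀ x ∈ Set.Ioo (0:ℝ) 1, G x < 1 := by
      intro x hx
      rw [hG x hx]
      have h1 := (AddisAux.Phi_mem (stdNormalQuantile x + μN)).2
      have h2 := (AddisAux.Phi_mem (stdNormalQuantile x + μA)).2
      nlinarith
    rcases eq_or_lt_of_le hlam0 with h0 | h0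
    · rcases eq_or_lt_of_le hτ1 with h1 | h1
      · rw [← h0, h1, hG0, hG1]; norm_num
      · have := hGpos τ ⟨hτ0, h1⟩
        rw [← h0, hG0]; linarith
    · rcases eq_or_lt_of_le hτ1 with h1 | h1
      · have := hGlt1 lam ⟨h0, hlam1⟩
        rw [h1, hG1]; linarith
      · -- both interior: G is strictly monotone there
        have hlt2 : stdNormalQuantile lam < stdNormalQuantile τ :=
          hQlt lam ⟨h0, hlam1⟩ τ ⟨hτ0, h1⟩ (lt_trans hlamc hcτ)
        have hm1 : stdNormalCDF (stdNormalQuantile lam + μN) < stdNormalCDF (stdNormalQuantile τ + μN) :=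
          AddisAux.Phi_strictMono (by linarith)
        have hm2 : stdNormalCDF (stdNormalQuantile lam + μA) < stdNormalCDF (stdNormalQuantile τ + μA) :=
          AddisAux.Phi_strictMono (by linarith)
        rw [hG lam ⟨h0, hlam1⟩, hG τ ⟨hτ0, h1⟩]
        nlinarith
  exact ⟨main, (one_lt_div hden).mpr main⟩
end

section
/- Let ε > 0, let (π_{A,i})_{i≥1} be a sequence in (0,1), and let (μ_{A,i})_{i≥1} satisfy μ_{A,i} > ε for all i. For η > 0 define h_i(η) = (1/μ_{A,i})·log(η/π_{A,i}) + μ_{A,i}/2. Assume there exists a sequence (b_i)_{i≥1} with b_i > 1, Σ_{i=1}^∞ 1/b_i < ∞, and √(log b_i)/h_i(1) → 0 as i → ∞. Then for every η > 0 the series S(η) = Σ_{i=1}^∞ Φ(−h_i(η)) converges, η ↦ S(η) is a continuous decreasing bijection from (0,∞) onto (0,∞), and consequently for every α ∈ (0,1) there exists η* > 0 such that Σ_{i=1}^∞ Φ(−h_i(η*)) = α. -/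
open MeasureTheory ProbabilityTheory Filter

open Set Real
open scoped NNReal ENNReal Topology

lemma stdNormalCDF_eq (x : ℝ) :
    stdNormalCDF x = ∫ t in Set.Iic x, gaussianPDFReal 0 1 t := by
  rw [stdNormalCDF, gaussianReal_apply_eq_integral 0 one_ne_zero,
    ENNReal.toReal_ofReal (integral_nonneg fun t => gaussianPDFReal_nonneg 0 1 t)]

lemma stdNormalCDF_sub (a c : ℝ) :
    stdNormalCDF c - stdNormalCDF a = ∫ t in a..c, gaussianPDFReal 0 1 t := by
  rw [stdNormalCDF_eq, stdNormalCDF_eq]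
  exact intervalIntegral.integral_Iic_sub_Iic ((integrable_gaussianPDFReal 0 1).integrableOn)
    ((integrable_gaussianPDFReal 0 1).integrableOn)

lemma stdNormalCDF_strictMono : StrictMono stdNormalCDF := by
  intro a c hac
  have h1 := stdNormalCDF_sub a c
  have h2 : 0 < ∫ t in a..c, gaussianPDFReal 0 1 t :=
    intervalIntegral.intervalIntegral_pos_of_pos ((integrable_gaussianPDFReal 0 1).intervalIntegrable)
      (fun x => gaussianPDFReal_pos 0 1 x one_ne_zero) hac
  linarith

lemma stdNormalCDF_continuous : Continuous stdNormalCDF := by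
  have : stdNormalCDF = fun x => stdNormalCDF 0 + ∫ t in (0:ℝ)..x, gaussianPDFReal 0 1 t := by
    ext x; have := stdNormalCDF_sub 0 x; linarith
  rw [this]
  exact continuous_const.add ((integrable_gaussianPDFReal 0 1).continuous_primitive 0)

lemma stdNormalCDF_pos (x : ℝ) : 0 < stdNormalCDF x := by
  have h1 := stdNormalCDF_sub (x - 1) x
  have h2 : 0 < ∫ t in (x-1)..x, gaussianPDFReal 0 1 t :=
    intervalIntegral.intervalIntegral_pos_of_pos ((integrable_gaussianPDFReal 0 1).intervalIntegrable)
      (fun x => gaussianPDFReal_pos 0 1 x one_ne_zero) (by linarith)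
  have h3 : 0 ≤ stdNormalCDF (x - 1) := ENNReal.toReal_nonneg
  linarith

lemma stdNormalCDF_nonneg (x : ℝ) : 0 ≤ stdNormalCDF x := ENNReal.toReal_nonneg

lemma stdNormalCDF_tail {x : ℝ} (hx : 0 ≤ x) :
    stdNormalCDF (-x) ≤ 4 * Real.exp (-x ^ 2 / 4) := by
  have hint : Integrable (fun t : ℝ => Real.exp (-4⁻¹ * t ^ 2)) :=
    integrable_exp_neg_mul_sq (by norm_num)
  have hkey : ∀ t ∈ Set.Iic (-x),
      gaussianPDFReal 0 1 t ≤ Real.exp (-x ^ 2 / 4) * Real.exp (-4⁻¹ * t ^ 2) := by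
    intro t ht
    simp only [Set.mem_Iic] at ht
    have h1 : x ^ 2 ≤ t ^ 2 := by nlinarith
    have h2 : (Real.sqrt (2 * π * ((1:ℝ≥0):ℝ)))⁻¹ ≤ 1 := by
      rw [NNReal.coe_one, mul_one]
      refine inv_le_one_of_one_le₀ ?_
      rw [show (1:ℝ) = Real.sqrt 1 by simp]
      exact Real.sqrt_le_sqrt (by nlinarith [Real.pi_gt_three])
    have h3 : Real.exp (-(t - 0) ^ 2 / (2 * ((1:ℝ≥0):ℝ)))
        ≤ Real.exp (-x ^ 2 / 4) * Real.exp (-4⁻¹ * t ^ 2) := by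
      rw [← Real.exp_add]
      apply Real.exp_le_exp.mpr
      push_cast
      nlinarith
    have h4 : gaussianPDFReal 0 1 t
        = (Real.sqrt (2 * π * ((1:ℝ≥0):ℝ)))⁻¹ * Real.exp (-(t - 0) ^ 2 / (2 * ((1:ℝ≥0):ℝ))) := rfl
    rw [h4]
    calc (Real.sqrt (2 * π * ((1:ℝ≥0):ℝ)))⁻¹ * Real.exp (-(t - 0) ^ 2 / (2 * ((1:ℝ≥0):ℝ)))
        ≤ 1 * (Real.exp (-x ^ 2 / 4) * Real.exp (-4⁻¹ * t ^ 2)) :=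
          mul_le_mul h2 h3 (Real.exp_pos _).le one_pos.le
      _ = _ := one_mul _
  have hmono : ∫ t in Set.Iic (-x), gaussianPDFReal 0 1 t
      ≤ ∫ t in Set.Iic (-x), Real.exp (-x ^ 2 / 4) * Real.exp (-4⁻¹ * t ^ 2) :=
    setIntegral_mono_on ((integrable_gaussianPDFReal 0 1).integrableOn)
      ((hint.const_mul _).integrableOn) measurableSet_Iic hkey
  have hle2 : ∫ t in Set.Iic (-x), Real.exp (-x ^ 2 / 4) * Real.exp (-4⁻¹ * t ^ 2)
      ≤ ∫ t : ℝ, Real.exp (-x ^ 2 / 4) * Real.exp (-4⁻¹ * t ^ 2) :=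
    setIntegral_le_integral (hint.const_mul _) (ae_of_all _ fun t => by positivity)
  have hval : ∫ t : ℝ, Real.exp (-x ^ 2 / 4) * Real.exp (-4⁻¹ * t ^ 2)
      = Real.exp (-x ^ 2 / 4) * Real.sqrt (π / 4⁻¹) := by
    rw [MeasureTheory.integral_const_mul, integral_gaussian]
  have hsq : Real.sqrt (π / 4⁻¹) ≤ 4 := by
    have h16 : Real.sqrt (π / 4⁻¹) ≤ Real.sqrt 16 :=
      Real.sqrt_le_sqrt (by
        have hpi := Real.pi_le_four
        have hring : π / (4:ℝ)⁻¹ = π * 4 := by ring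
        rw [hring]; linarith)
    rwa [show (16:ℝ) = 4 ^ 2 by norm_num, Real.sqrt_sq (by norm_num)] at h16
  have hfin : Real.exp (-x ^ 2 / 4) * Real.sqrt (π / 4⁻¹) ≤ 4 * Real.exp (-x ^ 2 / 4) := by
    rw [mul_comm (4:ℝ)]
    exact mul_le_mul_of_nonneg_left hsq (Real.exp_pos _).le
  calc stdNormalCDF (-x) = ∫ t in Set.Iic (-x), gaussianPDFReal 0 1 t := stdNormalCDF_eq _
    _ ≤ 4 * Real.exp (-x ^ 2 / 4) := by linarith

lemma stdNormalCDF_tendsto_one : Tendsto stdNormalCDF atTop (𝓝 1) := by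
  have h := tendsto_measure_Iic_atTop (gaussianReal 0 1)
  rw [measure_univ] at h
  have h2 := (ENNReal.tendsto_toReal (by norm_num : (1:ℝ≥0∞) ≠ ⊤)).comp h
  exact h2
/-- **Existence of the normalizing constant for the optimal Alpha-Spending allocation with
varying signal strengths and densities.** With `h_i(η) = (1/μ_{A,i}) log(η/π_{A,i}) + μ_{A,i}/2`,
if there is a sequence `b_i > 1` with `∑ 1/b_i < ∞` and `√(log b_i)/h_i(1) → 0`, then for
every `η > 0` the series `S(η) = ∑_i Φ(−h_i(η))` converges, `S` is a continuous decreasing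
bijection from `(0,∞)` onto `(0,∞)`, and for every `α ∈ (0,1)` there is `η* > 0` with
`S(η*) = α`. -/
theorem exists_normalizing_constant_varying_signals
    (ε : ℝ) (hε : 0 < ε)
    (πA μA : ℕ → ℝ) (hπA : ∀ i, πA i ∈ Set.Ioo (0 : ℝ) 1) (hμA : ∀ i, ε < μA i)
    (h : ℝ → ℕ → ℝ)
    (hh : ∀ η i, h η i = (1 / μA i) * Real.log (η / πA i) + μA i / 2)
    (b : ℕ → ℝ) (hb : ∀ i, 1 < b i) (hbsum : Summable (fun i => 1 / b i))
    (hblim : Tendsto (fun i => Real.sqrt (Real.log (b i)) / h 1 i) atTop (nhds 0))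
    (S : ℝ → ℝ) (hS : ∀ η, S η = ∑' i : ℕ, stdNormalCDF (-(h η i))) :
    (∀ η > (0 : ℝ), Summable (fun i : ℕ => stdNormalCDF (-(h η i)))) ∧
      ContinuousOn S (Set.Ioi 0) ∧
      StrictAntiOn S (Set.Ioi 0) ∧
      S '' Set.Ioi 0 = Set.Ioi 0 ∧
      ∀ α ∈ Set.Ioo (0 : ℝ) 1, ∃ ηstar > (0 : ℝ), S ηstar = α := by
  have hπ0 : ∀ i, 0 < πA i := fun i => (hπA i).1
  have hπ1 : ∀ i, πA i < 1 := fun i => (hπA i).2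
  have hμ0 : ∀ i, 0 < μA i := fun i => hε.trans (hμA i)
  -- decomposition of h
  have hdiff : ∀ η : ℝ, 0 < η → ∀ i, h η i = h 1 i + Real.log η / μA i := by
    intro η hη i
    rw [hh, hh, Real.log_div (ne_of_gt hη) (ne_of_gt (hπ0 i)),
      Real.log_div one_ne_zero (ne_of_gt (hπ0 i)), Real.log_one]
    have hμne : μA i ≠ 0 := ne_of_gt (hμ0 i)
    field_simp
    ring
  -- positivity of h 1 i
  have h1pos : ∀ i, 0 < h 1 i := by
    intro i
    rw [hh, Real.log_div one_ne_zero (ne_of_gt (hπ0 i)), Real.log_one, zero_sub]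
    have hlog : Real.log (πA i) < 0 := Real.log_neg (hπ0 i) (hπ1 i)
    have h1 : 0 < (1 / μA i) * -Real.log (πA i) :=
      mul_pos (one_div_pos.mpr (hμ0 i)) (neg_pos.mpr hlog)
    have h2 : 0 < μA i / 2 := half_pos (hμ0 i)
    linarith
  -- monotonicity of h in η
  have hmono : ∀ (i : ℕ) {a η : ℝ}, 0 < a → a ≤ η → h a i ≤ h η i := by
    intro i a η ha hle
    rw [hdiff a ha i, hdiff η (lt_of_lt_of_le ha hle) i]
    have hlog : Real.log a ≤ Real.log η := Real.log_le_log ha hle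
    have := hμ0 i
    gcongr
  have hmono' : ∀ (i : ℕ) {a η : ℝ}, 0 < a → a < η → h a i < h η i := by
    intro i a η ha hlt
    rw [hdiff a ha i, hdiff η (lt_trans ha hlt) i]
    have hlog : Real.log a < Real.log η := Real.log_lt_log ha hlt
    have := hμ0 i
    gcongr
  -- antitone terms
  have hanti : ∀ (i : ℕ) {a η : ℝ}, 0 < a → a ≤ η →
      stdNormalCDF (-(h η i)) ≤ stdNormalCDF (-(h a i)) := fun i a η ha hle =>
    stdNormalCDF_strictMono.monotone (neg_le_neg (hmono i ha hle))
  -- b tends to infinity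
  have hbpos : ∀ i, 0 < b i := fun i => lt_trans one_pos (hb i)
  have hbtop : Tendsto b atTop atTop := by
    have h0 : Tendsto (fun i => 1 / b i) atTop (nhdsWithin 0 (Set.Ioi 0)) := by
      refine tendsto_nhdsWithin_of_tendsto_nhds_of_eventually_within _
        hbsum.tendsto_atTop_zero ?_
      exact Eventually.of_forall fun i => Set.mem_Ioi.mpr (one_div_pos.mpr (hbpos i))
    have h1 := h0.inv_tendsto_nhdsGT_zero
    refine h1.congr fun i => ?_
    simp [Pi.inv_apply, one_div]
  have hLtop : Tendsto (fun i => Real.log (b i)) atTop atTop :=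
    Real.tendsto_log_atTop.comp hbtop
  -- the eventual bound
  have hev : ∀ η : ℝ, 0 < η → ∀ᶠ i in atTop, stdNormalCDF (-(h η i)) ≤ 1 / b i := by
    intro η hη
    have h4 : ∀ᶠ i in atTop, Real.sqrt (Real.log (b i)) / h 1 i < 1 / 4 :=
      hblim.eventually_lt_const (by norm_num)
    have h5 : ∀ᶠ i in atTop,
        max (Real.log 4) ((|Real.log η| / ε) ^ 2) ≤ Real.log (b i) :=
      hLtop.eventually_ge_atTop _
    filter_upwards [h4, h5] with i h4i h5i
    set L := Real.log (b i) with hLdef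
    have hL4 : Real.log 4 ≤ L := le_trans (le_max_left _ _) h5i
    have hLsq : (|Real.log η| / ε) ^ 2 ≤ L := le_trans (le_max_right _ _) h5i
    have hL0 : 0 ≤ L := le_trans (Real.log_nonneg (by norm_num)) hL4
    have hsqrtL : |Real.log η| / ε ≤ Real.sqrt L := by
      have := Real.sqrt_le_sqrt hLsq
      rwa [Real.sqrt_sq (div_nonneg (abs_nonneg _) hε.le)] at this
    have hsL0 : 0 ≤ Real.sqrt L := Real.sqrt_nonneg L
    have h1i : 0 < h 1 i := h1pos i
    have hs4 : 4 * Real.sqrt L < h 1 i := by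
      rw [div_lt_iff₀ h1i] at h4i; linarith
    have hηL : 3 * Real.sqrt L ≤ h η i := by
      rw [hdiff η hη i]
      have habs : |Real.log η / μA i| ≤ |Real.log η| / ε := by
        rw [abs_div, abs_of_pos (hμ0 i)]
        gcongr
        exact (hμA i).le
      have hnab := neg_abs_le (Real.log η / μA i)
      linarith
    have hη0 : 0 ≤ h η i := le_trans (by positivity) hηL
    have htail := stdNormalCDF_tail hη0
    have hsq9 : 9 * L ≤ (h η i) ^ 2 := by
      have hss := Real.sq_sqrt hL0
      nlinarith
    have hexp : Real.exp (-(h η i) ^ 2 / 4) ≤ Real.exp (-(9 * L) / 4) :=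
      Real.exp_le_exp.mpr (by linarith)
    have h4le : (4 : ℝ) ≤ Real.exp L := by
      rw [← Real.exp_log (show (0:ℝ) < 4 by norm_num)]
      exact Real.exp_le_exp.mpr hL4
    have hfinal : 4 * Real.exp (-(9 * L) / 4) ≤ Real.exp (-L) := by
      have e1 : 4 * Real.exp (-(9 * L) / 4) ≤ Real.exp L * Real.exp (-(9 * L) / 4) :=
        mul_le_mul_of_nonneg_right h4le (Real.exp_pos _).le
      have e2 : Real.exp L * Real.exp (-(9 * L) / 4) = Real.exp (-L) * Real.exp (-L / 4) := by
        rw [← Real.exp_add, ← Real.exp_add]; ring_nf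
      have e3 : Real.exp (-L) * Real.exp (-L / 4) ≤ Real.exp (-L) * 1 :=
        mul_le_mul_of_nonneg_left (Real.exp_le_one_iff.mpr (by linarith)) (Real.exp_pos _).le
      rw [mul_one] at e3
      linarith
    have hbL : Real.exp (-L) = 1 / b i := by
      rw [Real.exp_neg, Real.exp_log (hbpos i), one_div]
    calc stdNormalCDF (-(h η i)) ≤ 4 * Real.exp (-(h η i) ^ 2 / 4) := htail
      _ ≤ 4 * Real.exp (-(9 * L) / 4) := by linarith
      _ ≤ Real.exp (-L) := hfinal
      _ = 1 / b i := hbL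
  -- summability
  have hsummable : ∀ η : ℝ, 0 < η → Summable (fun i : ℕ => stdNormalCDF (-(h η i))) := by
    intro η hη
    obtain ⟨N, hN⟩ := eventually_atTop.mp (hev η hη)
    rw [← summable_nat_add_iff N]
    refine Summable.of_nonneg_of_le (fun i => stdNormalCDF_nonneg _)
      (fun i => hN (i + N) (Nat.le_add_left N i)) ?_
    exact (summable_nat_add_iff N).mpr hbsum
  -- continuity of η ↦ h η i on Ici a
  have hcont_h : ∀ (i : ℕ) (a : ℝ), 0 < a → ContinuousOn (fun η => h η i) (Set.Ici a) := by
    intro i a ha η hη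
    have hη0 : 0 < η := lt_of_lt_of_le ha hη
    have hrw : (fun η => h η i) = fun η => (1 / μA i) * Real.log (η / πA i) + μA i / 2 :=
      funext fun η => hh η i
    rw [hrw]
    have hca : ContinuousAt (fun η : ℝ => (1 / μA i) * Real.log (η / πA i) + μA i / 2) η := by
      refine (ContinuousAt.mul continuousAt_const ?_).add continuousAt_const
      exact (continuousAt_id.div_const (πA i)).log (ne_of_gt (div_pos hη0 (hπ0 i)))
    exact hca.continuousWithinAt
  -- continuity of S
  have hScont : ContinuousOn S (Set.Ioi 0) := by
    intro x hx
    have hx0 : (0 : ℝ) < x := hx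
    have hx2 : (0 : ℝ) < x / 2 := by linarith
    have hbase : ContinuousOn (fun η => ∑' i : ℕ, stdNormalCDF (-(h η i))) (Set.Ici (x / 2)) := by
      refine continuousOn_tsum
        (fun i => stdNormalCDF_continuous.comp_continuousOn ((hcont_h i _ hx2).neg))
        (hsummable (x / 2) hx2) ?_
      intro i η hη
      rw [Real.norm_of_nonneg (stdNormalCDF_nonneg _)]
      exact hanti i hx2 hη
    have hSeq : ContinuousOn S (Set.Ici (x / 2)) :=
      hbase.congr fun η _ => hS η
    have hmem : Set.Ici (x / 2) ∈ nhdsWithin x (Set.Ioi 0) :=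
      mem_nhdsWithin_of_mem_nhds (Ici_mem_nhds (by linarith))
    exact (hSeq x (by simp only [Set.mem_Ici]; linarith)).mono_of_mem_nhdsWithin hmem
  -- strict antitonicity
  have hSanti : StrictAntiOn S (Set.Ioi 0) := by
    intro a ha c hc hac
    have ha0 : (0 : ℝ) < a := ha
    have hc0 : (0 : ℝ) < c := hc
    rw [hS a, hS c]
    refine Summable.tsum_lt_tsum_of_nonneg (i := 0) (fun i => stdNormalCDF_nonneg _)
      (fun i => hanti i ha0 hac.le) ?_ (hsummable a ha0)
    exact stdNormalCDF_strictMono (neg_lt_neg (hmono' 0 ha0 hac))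
  -- limit of S at infinity
  have hterm0 : ∀ i : ℕ, Tendsto (fun η => stdNormalCDF (-(h η i))) atTop (nhds 0) := by
    intro i
    have hhtop : Tendsto (fun η => h η i) atTop atTop := by
      have h1 : Tendsto (fun η : ℝ => h 1 i + Real.log η / μA i) atTop atTop :=
        tendsto_atTop_add_const_left _ _ (Real.tendsto_log_atTop.atTop_div_const (hμ0 i))
      refine h1.congr' ?_
      filter_upwards [eventually_gt_atTop (0:ℝ)] with η hη
      exact (hdiff η hη i).symm
    have hup : Tendsto (fun η => 4 * Real.exp (-(h η i) ^ 2 / 4)) atTop (nhds 0) := by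
      have hsq : Tendsto (fun η => (h η i) ^ 2) atTop atTop := by
        have := hhtop.atTop_mul_atTop₀ hhtop
        refine this.congr fun η => ?_
        ring
      have hdiv : Tendsto (fun η => (h η i) ^ 2 / 4) atTop atTop :=
        hsq.atTop_div_const (by norm_num)
      have hneg : Tendsto (fun η => -(h η i) ^ 2 / 4) atTop atBot := by
        have := (tendsto_neg_atTop_atBot).comp hdiv
        refine this.congr fun η => ?_
        simp [Function.comp]
        ring
      have hexp : Tendsto (fun η => Real.exp (-(h η i) ^ 2 / 4)) atTop (nhds 0) :=
        Real.tendsto_exp_atBot.comp hneg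
      have := hexp.const_mul (4:ℝ)
      simpa using this
    refine squeeze_zero' (Eventually.of_forall fun η => stdNormalCDF_nonneg _) ?_ hup
    filter_upwards [hhtop.eventually_ge_atTop 0] with η hη
    exact stdNormalCDF_tail hη
  have hStop : Tendsto S atTop (nhds 0) := by
    have hbd : ∀ᶠ η : ℝ in atTop, ∀ i : ℕ,
        ‖stdNormalCDF (-(h η i))‖ ≤ stdNormalCDF (-(h 1 i)) := by
      filter_upwards [eventually_ge_atTop (1:ℝ)] with η hη i
      rw [Real.norm_of_nonneg (stdNormalCDF_nonneg _)]
      exact hanti i one_pos hη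
    have := tendsto_tsum_of_dominated_convergence (hsummable 1 one_pos) hterm0 hbd
    rw [tsum_zero] at this
    exact this.congr fun η => (hS η).symm
  -- the key surjectivity claim
  have hclaim : ∀ y : ℝ, 0 < y → ∃ η : ℝ, 0 < η ∧ S η = y := by
    intro y hy
    obtain ⟨c, hc1, hcy⟩ : ∃ c : ℝ, 1 ≤ c ∧ S c < y := by
      obtain ⟨c, h1, h2⟩ := ((hStop.eventually_lt_const hy).and (eventually_ge_atTop 1)).exists
      exact ⟨c, h2, h1⟩
    have hc0 : (0 : ℝ) < c := lt_of_lt_of_le one_pos hc1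
    set N : ℕ := ⌈y⌉₊ + 1 with hNdef
    have hyN : y < (N : ℝ) := by
      have := Nat.le_ceil y
      push_cast [hNdef]
      linarith
    have hterm1 : ∀ i : ℕ, Tendsto (fun a => stdNormalCDF (-(h a i)))
        (nhdsWithin 0 (Set.Ioi 0)) (nhds 1) := by
      intro i
      have hbot : Tendsto (fun a => h a i) (nhdsWithin 0 (Set.Ioi 0)) atBot := by
        have h1 : Tendsto (fun a : ℝ => h 1 i + Real.log a / μA i)
            (nhdsWithin 0 (Set.Ioi 0)) atBot :=
          tendsto_atBot_add_const_left _ _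
            (Real.tendsto_log_nhdsGT_zero.atBot_div_const (hμ0 i))
        refine h1.congr' ?_
        filter_upwards [self_mem_nhdsWithin] with a ha
        exact (hdiff a ha i).symm
      have hneg : Tendsto (fun a => -(h a i)) (nhdsWithin 0 (Set.Ioi 0)) atTop :=
        tendsto_neg_atBot_atTop.comp hbot
      exact stdNormalCDF_tendsto_one.comp hneg
    have hsum_tendsto : Tendsto (fun a => ∑ i ∈ Finset.range N, stdNormalCDF (-(h a i)))
        (nhdsWithin 0 (Set.Ioi 0)) (nhds (N : ℝ)) := by
      have htfs := tendsto_finset_sum (Finset.range N) (fun i _ => hterm1 i)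
      rw [Finset.sum_const, Finset.card_range, nsmul_eq_mul, mul_one] at htfs
      exact htfs
    obtain ⟨a, hya, ha0⟩ := ((hsum_tendsto.eventually_const_lt hyN).and self_mem_nhdsWithin).exists
    have ha0' : (0 : ℝ) < a := ha0
    have hSa : y < S a := by
      refine lt_of_lt_of_le hya ?_
      rw [hS]
      exact Summable.sum_le_tsum (Finset.range N) (fun i _ => stdNormalCDF_nonneg _) (hsummable a ha0')
    have hac : a < c := by
      by_contra hcon
      push_neg at hcon
      have hle : S a ≤ S c := by
        rcases eq_or_lt_of_le hcon with heq | hlt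
        · rw [heq]
        · exact (hSanti hc0 ha0' hlt).le
      linarith
    have hconIcc : ContinuousOn S (Set.Icc a c) :=
      hScont.mono fun t ht => lt_of_lt_of_le ha0' ht.1
    obtain ⟨η, hηmem, hηy⟩ := intermediate_value_Icc' hac.le hconIcc ⟨hcy.le, hSa.le⟩
    exact ⟨η, lt_of_lt_of_le ha0' hηmem.1, hηy⟩
  -- image
  have himg : S '' Set.Ioi 0 = Set.Ioi 0 := by
    apply Set.Subset.antisymm
    · rintro _ ⟨η, hη, rfl⟩
      have hη0 : (0 : ℝ) < η := hη
      simp only [Set.mem_Ioi]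
      rw [hS]
      exact Summable.tsum_pos (hsummable η hη0) (fun i => stdNormalCDF_nonneg _) 0 (stdNormalCDF_pos _)
    · intro y hy
      obtain ⟨η, hη, hSη⟩ := hclaim y hy
      exact ⟨η, hη, hSη⟩
  refine ⟨fun η hη => hsummable η hη, hScont, hSanti, himg, ?_⟩
  intro α hα
  obtain ⟨η, hη, hSη⟩ := hclaim α hα.1
  exact ⟨η, hη, hSη⟩
end
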